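/- For μ ∈ (0,1), the point α = ((μ,0),(−μ,0)) ∈ 𝓕₂(B₁(0)) is a critical point of the disc 2-vortex Hamiltonian 𝓗 (that is, ∇𝓗(α) = 0) if and only if μ⁴ = 1 − 4μ². In particular μ = √(√5 − 2) gives a critical point. -/

import Mathlib

noncomputable section

open Real

/-- The plane `ℝ²` with its Euclidean structure. -/
abbrev R2 : Type := EuclideanSpace ℝ (Fin 2)

/-- The standard symplectic matrix `J` (rotation by `-π/2`): `J(x₁,x₂) = (x₂,-x₁)`. -/
def Jrot (x : R2) : R2 := (WithLp.equiv 2 (Fin 2 → ℝ)).symm ![x 1, -(x 0)]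

/-- The rotation `e^{θJ}` of the plane. -/
def rotate (θ : ℝ) (x : R2) : R2 :=
  (WithLp.equiv 2 (Fin 2 → ℝ)).symm
    ![Real.cos θ * x 0 + Real.sin θ * x 1, -Real.sin θ * x 0 + Real.cos θ * x 1]

/-- The point `(x₁,x₂) ∈ ℝ²`. -/
def vec (x₁ x₂ : ℝ) : R2 := (WithLp.equiv 2 (Fin 2 → ℝ)).symm ![x₁, x₂]

/-- The regular part of the Dirichlet Green's function of the unit disc. -/
def discg (x y : R2) : ℝ :=
  -(1 / (4 * π)) * Real.log (‖x‖ ^ 2 * ‖y‖ ^ 2 - 2 * (inner ℝ x y : ℝ) + 1)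

/-- The disc `2`-vortex Hamiltonian `𝓗` with vorticities `Γ¹ = 1`, `Γ² = -1`. -/
def discHam (x y : R2) : ℝ :=
  (1 / π) * (Real.log ‖x - y‖
      - 1 / 2 * Real.log (‖x‖ ^ 2 * ‖y‖ ^ 2 - 2 * (inner ℝ x y : ℝ) + 1))
    + 1 / (2 * π) * (Real.log (1 - ‖x‖ ^ 2) + Real.log (1 - ‖y‖ ^ 2))

/-- The disc `2`-vortex Hamiltonian as a function on `(ℝ²)²`. -/
def discHamV (a : Fin 2 → R2) : ℝ := discHam (a 0) (a 1)

/-- Partial gradient `∇_{zᵢ} f(z) ∈ ℝ²` of a function of several planar variables. -/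
def pgrad {ι : Type*} [DecidableEq ι] (f : (ι → R2) → ℝ) (z : ι → R2) (i : ι) : R2 :=
  gradient (fun p => f (Function.update z i p)) (z i)

/-- Kernel of the Hessian `∇²f(z)` viewed as a map into the dual space. -/
def hessKer {ι : Type*} [Fintype ι] (f : (ι → R2) → ℝ) (z : ι → R2) :
    Submodule ℝ (ι → R2) :=
  LinearMap.ker (fderiv ℝ (fderiv ℝ f) z : (ι → R2) →ₗ[ℝ] ((ι → R2) →L[ℝ] ℝ))

/-- Reflection at the unit circle, `R(y) = y/|y|²`. -/
def Rmap (y : R2) : R2 := (‖y‖ ^ 2)⁻¹ • y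

lemma vec_apply0 (a b : ℝ) : vec a b 0 = a := rfl
lemma vec_apply1 (a b : ℝ) : vec a b 1 = b := rfl

lemma inner_vec_left (a b : ℝ) (h : R2) : (inner ℝ (vec a b) h : ℝ) = a * h 0 + b * h 1 := by
  simp [vec, PiLp.inner_apply, Fin.sum_univ_two, RCLike.inner_apply, WithLp.equiv_symm_apply]
  ring

lemma norm_vec_sq (a b : ℝ) : ‖(vec a b : R2)‖ ^ 2 = a ^ 2 + b ^ 2 := by
  rw [← real_inner_self_eq_norm_sq, inner_vec_left]
  simp [vec, WithLp.equiv_symm_apply]; ring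

lemma vec_sub (a b c d : ℝ) : (vec a b : R2) - vec c d = vec (a - c) (b - d) := by
  ext i; fin_cases i <;> rfl

lemma vec_neg (a b : ℝ) : -(vec a b : R2) = vec (-a) (-b) := by
  ext i; fin_cases i <;> rfl

lemma vec_zero : (vec 0 0 : R2) = 0 := by
  ext i; fin_cases i <;> rfl

lemma vec_eq_zero_iff (a b : ℝ) : (vec a b : R2) = 0 ↔ a = 0 ∧ b = 0 := by
  constructor
  · intro h
    constructor
    · have := congrArg (fun v : R2 => v 0) h; simpa [vec_apply0] using this
    · have := congrArg (fun v : R2 => v 1) h; simpa [vec_apply1] using this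
  · rintro ⟨rfl, rfl⟩; exact vec_zero

lemma key1 (μ : ℝ) (hμ0 : 0 < μ) (hμ1 : μ < 1) :
    HasGradientAt (fun x : R2 => discHam x (vec (-μ) 0))
      (vec ((1/π) * (1/(2*μ) - μ/(1+μ^2) - μ/(1-μ^2))) 0) (vec μ 0) := by
  rw [hasGradientAt_iff_hasFDerivAt]
  set y : R2 := vec (-μ) 0 with hy
  set x₀ : R2 := vec μ 0 with hx₀
  have hμ2 : (0:ℝ) < 1 - μ^2 := by nlinarith
  have hne1 : ‖x₀ - y‖ ^ 2 ≠ 0 := by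
    rw [hx₀, hy, vec_sub, norm_vec_sq]; nlinarith
  have hne2 : ‖x₀‖ ^ 2 * ‖y‖ ^ 2 - 2 * (inner ℝ x₀ y : ℝ) + 1 ≠ 0 := by
    rw [hx₀, hy, norm_vec_sq, norm_vec_sq, inner_vec_left, vec_apply0, vec_apply1]
    nlinarith
  have hne3 : 1 - ‖x₀‖ ^ 2 ≠ 0 := by
    rw [hx₀, norm_vec_sq]; nlinarith
  -- pieces
  have A1 : HasFDerivAt (fun x : R2 => ‖x - y‖ ^ 2)
      (2 • ((innerSL ℝ) (x₀ - y)).comp (ContinuousLinearMap.id ℝ R2)) x₀ := by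
    simpa using ((hasFDerivAt_id x₀).sub_const y).norm_sq
  have A2 := A1.log hne1
  have A : HasFDerivAt (fun x : R2 => Real.log ‖x - y‖)
      ((1/2 : ℝ) • ((‖x₀ - y‖ ^ 2)⁻¹ • (2 • ((innerSL ℝ) (x₀ - y)).comp (ContinuousLinearMap.id ℝ R2)))) x₀ := by
    refine (A2.const_mul (1/2)).congr_of_eventuallyEq (.of_forall fun x => ?_)
    show Real.log ‖x - y‖ = 1/2 * Real.log (‖x - y‖ ^ 2)
    rw [Real.log_pow]; push_cast; ring
  have nsq : HasFDerivAt (fun x : R2 => ‖x‖ ^ 2)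
      (2 • ((innerSL ℝ) x₀).comp (ContinuousLinearMap.id ℝ R2)) x₀ := by
    simpa using (hasFDerivAt_id x₀).norm_sq
  have ipr : HasFDerivAt (fun x : R2 => (inner ℝ x y : ℝ)) ((innerSL ℝ) y : R2 →L[ℝ] ℝ) x₀ := by
    refine ((innerSL ℝ) y : R2 →L[ℝ] ℝ).hasFDerivAt.congr_of_eventuallyEq
      (.of_forall fun x => ?_)
    exact (real_inner_comm x y).symm
  have Bq := ((nsq.mul_const (‖y‖ ^ 2)).sub (ipr.const_mul 2)).add_const 1
  have Blog := Bq.log hne2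
  have Clog := (nsq.const_sub 1).log hne3
  have Dd := Clog.add_const (Real.log (1 - ‖y‖ ^ 2))
  have total := ((A.sub (Blog.const_mul (1/2))).const_mul (1/π)).add (Dd.const_mul (1/(2*π)))
  refine HasFDerivAt.congr_fderiv total ?_
  ext h
  simp only [ContinuousLinearMap.add_apply, ContinuousLinearMap.smul_apply,
    ContinuousLinearMap.sub_apply, ContinuousLinearMap.comp_apply,
    ContinuousLinearMap.neg_apply, ContinuousLinearMap.coe_id', id_eq,
    innerSL_apply_apply, smul_eq_mul, InnerProductSpace.toDual_apply_apply,
    ContinuousLinearMap.coe_smul', Pi.smul_apply, Pi.sub_apply]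
  simp only [hx₀, hy, vec_sub, norm_vec_sq, inner_vec_left, vec_apply0, vec_apply1]
  have h1 : (1:ℝ) + μ^2 ≠ 0 := by positivity
  have h2 : (1:ℝ) - μ^2 ≠ 0 := by nlinarith
  have h3 : π ≠ 0 := Real.pi_ne_zero
  have h4 : μ ≠ 0 := ne_of_gt hμ0
  have h6 : (μ ^ 2 + 0 ^ 2) ^ 2 - 2 * (-μ ^ 2 + 0 ^ 2) + 1 ≠ 0 := by nlinarith
  have h7 : 1 - (μ ^ 2 + 0 ^ 2) ≠ 0 := by nlinarith
  simp only [nsmul_eq_mul]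
  field_simp
  ring

lemma discHam_symm (x y : R2) : discHam x y = discHam y x := by
  unfold discHam
  rw [norm_sub_rev, real_inner_comm y x]
  ring

lemma discHam_neg (x y : R2) : discHam (-x) (-y) = discHam x y := by
  unfold discHam
  rw [neg_sub_neg, norm_sub_rev, norm_neg, norm_neg, inner_neg_neg]

lemma key2 (μ : ℝ) (hμ0 : 0 < μ) (hμ1 : μ < 1) :
    HasGradientAt (fun p : R2 => discHam (vec μ 0) p)
      (vec (-((1/π) * (1/(2*μ) - μ/(1+μ^2) - μ/(1-μ^2)))) 0) (vec (-μ) 0) := by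
  have k1 := key1 μ hμ0 hμ1
  rw [hasGradientAt_iff_hasFDerivAt] at k1 ⊢
  set N : R2 →L[ℝ] R2 := -(ContinuousLinearMap.id ℝ R2) with hN
  have e : vec μ 0 = N (vec (-μ) 0) := by
    simp [hN, vec_neg]
  rw [e] at k1
  have hcomp := k1.comp (vec (-μ) 0) N.hasFDerivAt
  refine HasFDerivAt.congr_fderiv (hcomp.congr_of_eventuallyEq (.of_forall fun p => ?_)) ?_
  · show discHam (vec μ 0) p = ((fun x : R2 => discHam x (vec (-μ) 0)) ∘ N) p
    have : (N p : R2) = -p := by simp [hN]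
    rw [Function.comp_apply, this, discHam_symm, ← discHam_neg p (vec μ 0), vec_neg, neg_zero]
  · ext h
    simp only [ContinuousLinearMap.comp_apply, InnerProductSpace.toDual_apply_apply,
      inner_vec_left, hN, ContinuousLinearMap.neg_apply, ContinuousLinearMap.coe_id', id_eq,
      PiLp.neg_apply]
    ring

/-- `((μ,0),(-μ,0))` is critical for the disc Hamiltonian iff
`μ⁴ = 1 - 4μ²`; in particular `μ = √(√5-2)` gives a critical point. -/
theorem statement15 (μ : ℝ) (hμ0 : 0 < μ) (hμ1 : μ < 1) :
    ((∀ k, pgrad discHamV ![vec μ 0, vec (-μ) 0] k = 0) ↔ μ ^ 4 = 1 - 4 * μ ^ 2) ∧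
    (μ = Real.sqrt (Real.sqrt 5 - 2) →
      ∀ k, pgrad discHamV ![vec μ 0, vec (-μ) 0] k = 0) := by
  have h3 : π ≠ 0 := Real.pi_ne_zero
  have h4 : μ ≠ 0 := ne_of_gt hμ0
  have h1 : (1:ℝ) + μ^2 ≠ 0 := by positivity
  have h2 : (1:ℝ) - μ^2 ≠ 0 := by nlinarith
  have hiff : (∀ k, pgrad discHamV ![vec μ 0, vec (-μ) 0] k = 0) ↔ μ ^ 4 = 1 - 4 * μ ^ 2 := by
    set c := (1/π) * (1/(2*μ) - μ/(1+μ^2) - μ/(1-μ^2)) with hc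
    have g0 : pgrad discHamV ![vec μ 0, vec (-μ) 0] 0 = vec c 0 := by
      unfold pgrad
      have hfun : (fun p => discHamV (Function.update ![vec μ 0, vec (-μ) 0] 0 p))
          = fun p : R2 => discHam p (vec (-μ) 0) := by
        funext p
        simp [discHamV, Function.update]
      rw [show (![vec μ 0, vec (-μ) 0] : Fin 2 → R2) 0 = vec μ 0 from rfl, hfun]
      exact (key1 μ hμ0 hμ1).gradient
    have g1 : pgrad discHamV ![vec μ 0, vec (-μ) 0] 1 = vec (-c) 0 := by
      unfold pgrad
      have hfun : (fun p => discHamV (Function.update ![vec μ 0, vec (-μ) 0] 1 p))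
          = fun p : R2 => discHam (vec μ 0) p := by
        funext p
        simp [discHamV, Function.update]
      rw [show (![vec μ 0, vec (-μ) 0] : Fin 2 → R2) 1 = vec (-μ) 0 from rfl, hfun]
      exact (key2 μ hμ0 hμ1).gradient
    constructor
    · intro hall
      have h0 := hall 0
      rw [g0] at h0
      have hc0 : c = 0 := ((vec_eq_zero_iff _ _).1 h0).1
      rw [hc] at hc0
      field_simp at hc0
      nlinarith [hc0]
    · intro heq k
      have hc0 : c = 0 := by rw [hc]; field_simp; nlinarith [heq]
      fin_cases k
      · show pgrad discHamV ![vec μ 0, vec (-μ) 0] 0 = 0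
        rw [g0, hc0, vec_zero]
      · show pgrad discHamV ![vec μ 0, vec (-μ) 0] 1 = 0
        rw [g1, hc0, neg_zero, vec_zero]
  refine ⟨hiff, fun hμ => hiff.2 ?_⟩
  have h5 : Real.sqrt 5 ^ 2 = 5 := Real.sq_sqrt (by norm_num)
  have h5' : (2:ℝ) ≤ Real.sqrt 5 := by nlinarith [Real.sqrt_nonneg 5]
  have hm2 : μ ^ 2 = Real.sqrt 5 - 2 := by rw [hμ]; exact Real.sq_sqrt (by linarith)
  nlinarith [hm2]
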